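/- Let p > 2. There exists a constant C > 0 depending only on p such that for every non-decreasing g : [0,1] → ℝ with ∫₀¹ |g(u)|^p du < ∞ and every h ∈ (0,1), ∫₀^{1−h} (g(u+h) − g(u))² du ≤ C · (∫₀¹ |g(u)|^p du)^{2/p} · h^{(p−2)/p}. -/

import Mathlib

open MeasureTheory Set

lemma memLp_of_int {f : ℝ → ℝ} {μ : Measure ℝ} {r : ℝ} (hr : 0 < r)
    (hf : AEStronglyMeasurable f μ) (hint : Integrable (fun x => |f x| ^ r) μ) :
    MemLp f (ENNReal.ofReal r) μ := by
  have hq0 : (ENNReal.ofReal r) ≠ 0 := by simp [hr, hr.le]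
  have hqt : (ENNReal.ofReal r) ≠ ⊤ := ENNReal.ofReal_ne_top
  have := (memLp_norm_rpow_iff (q := ENNReal.ofReal r) (p := ENNReal.ofReal r) hf hq0 hqt).mp
  rw [ENNReal.div_self hq0 hqt] at this
  apply this
  rw [memLp_one_iff_integrable]
  simpa [ENNReal.toReal_ofReal hr.le, Real.norm_eq_abs] using hint

lemma shift_integrableOn {f : ℝ → ℝ} {a b c : ℝ} (hab : a ≤ b)
    (hf : IntegrableOn f (Ioo a b)) :
    IntegrableOn (fun x => f (x + c)) (Ioo (a - c) (b - c)) := by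
  have h1 : IntervalIntegrable f volume a b := by
    rwa [intervalIntegrable_iff_integrableOn_Ioo_of_le hab]
  have h2 := h1.comp_add_right c
  rwa [intervalIntegrable_iff_integrableOn_Ioo_of_le (by linarith)] at h2

lemma shift_integral (f : ℝ → ℝ) (a b c : ℝ) (hab : a ≤ b) :
    ∫ x in Ioo (a - c) (b - c), f (x + c) = ∫ x in Ioo a b, f x := by
  have h1 : (∫ x in (a-c)..(b-c), f (x + c)) = ∫ x in a..b, f x := by
    rw [intervalIntegral.integral_comp_add_right]
    norm_num
  rw [intervalIntegral.integral_of_le (by linarith : a - c ≤ b - c),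
    intervalIntegral.integral_of_le hab, integral_Ioc_eq_integral_Ioo,
    integral_Ioc_eq_integral_Ioo] at h1
  exact h1

lemma small_interval {p : ℝ} (hp : 1 < p) {g : ℝ → ℝ}
    (hm : AEMeasurable g (volume.restrict (Ioo (0:ℝ) 1)))
    (hint : IntegrableOn (fun u => |g u| ^ p) (Ioo (0:ℝ) 1))
    {a b : ℝ} (h0 : 0 ≤ a) (hab : a ≤ b) (hb1 : b ≤ 1) :
    ∫ u in Ioo a b, |g u| ≤
      (∫ u in Ioo (0:ℝ) 1, |g u| ^ p) ^ (1/p) * (b - a) ^ (1 - 1/p) := by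
  have hp0 : 0 < p := by linarith
  have hsub : Ioo a b ⊆ Ioo (0:ℝ) 1 := fun x hx => ⟨lt_of_le_of_lt h0 hx.1, lt_of_lt_of_le hx.2 hb1⟩
  have hpq : p.HolderConjugate (p / (p-1)) := (Real.holderConjugate_iff_eq_conjExponent hp).mpr rfl
  have hm' : AEMeasurable g (volume.restrict (Ioo a b)) :=
    hm.mono_measure (Measure.restrict_mono hsub le_rfl)
  have hintab : Integrable (fun x => |(|g x|)| ^ p) (volume.restrict (Ioo a b)) := by
    simpa only [abs_abs, IntegrableOn] using (hint.mono_set hsub)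
  have habs : AEStronglyMeasurable (fun u => |g u|) (volume.restrict (Ioo a b)) := by
    simpa [Real.norm_eq_abs] using hm'.aestronglyMeasurable.norm
  have hmem : MemLp (fun u => |g u|) (ENNReal.ofReal p) (volume.restrict (Ioo a b)) :=
    memLp_of_int hp0 habs hintab
  have H := integral_mul_le_Lp_mul_Lq_of_nonneg (μ := volume.restrict (Ioo a b)) hpq
    (f := fun u => |g u|) (g := fun _ => (1:ℝ)) (ae_of_all _ fun x => abs_nonneg _)
    (ae_of_all _ fun _ => zero_le_one) hmem (memLp_const 1)
  simp only [mul_one, Real.one_rpow] at H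
  rw [setIntegral_const, Real.volume_real_Ioo_of_le hab, smul_eq_mul,
    mul_one] at H
  have h1q : 1 / (p / (p-1)) = 1 - 1/p := by field_simp
  rw [h1q] at H
  refine H.trans (mul_le_mul_of_nonneg_right ?_ (Real.rpow_nonneg (by linarith) _))
  apply Real.rpow_le_rpow (setIntegral_nonneg measurableSet_Ioo fun x _ => Real.rpow_nonneg (abs_nonneg _) _)
    (setIntegral_mono_set hint (ae_of_all _ fun x => Real.rpow_nonneg (abs_nonneg _) _)
      (HasSubset.Subset.eventuallyLE hsub)) (by positivity)

/-- Let `p > 2`. There exists a constant `C > 0` depending only on `p`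
such that for every non-decreasing `g : [0,1] → ℝ` with `∫₀¹ |g(u)|^p du < ∞` and every
`h ∈ (0,1)`, `∫₀^{1−h} (g(u+h) − g(u))² du ≤ C · (∫₀¹ |g(u)|^p du)^{2/p} · h^{(p−2)/p}`. -/
theorem stmt1 (p : ℝ) (hp : 2 < p) :
    ∃ C : ℝ, 0 < C ∧
      ∀ g : ℝ → ℝ, MonotoneOn g (Set.Icc 0 1) →
        IntegrableOn (fun u => |g u| ^ p) (Set.Ioo 0 1) →
        ∀ h : ℝ, 0 < h → h < 1 →
          ∫ u in Set.Ioo (0:ℝ) (1 - h), (g (u + h) - g u) ^ 2 ≤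
            C * (∫ u in Set.Ioo (0:ℝ) 1, |g u| ^ p) ^ (2/p) * h ^ ((p - 2)/p) := by
  have hp1 : 1 < p := by linarith
  have hp0 : 0 < p := by linarith
  have hpm1 : (0:ℝ) < p - 1 := by linarith
  have hpm2 : (0:ℝ) < p - 2 := by linarith
  refine ⟨2 ^ ((2*p-1)/(p-1)), Real.rpow_pos_of_pos two_pos _, ?_⟩
  intro g hmono hint h h0 h1
  set I := ∫ u in Ioo (0:ℝ) 1, |g u| ^ p with hIdef
  have hI0 : 0 ≤ I :=
    setIntegral_nonneg measurableSet_Ioo fun x _ => Real.rpow_nonneg (abs_nonneg _) _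
  have h1h : (0:ℝ) < 1 - h := by linarith
  have hsub : Ioo (0:ℝ) (1-h) ⊆ Ioo (0:ℝ) 1 := fun x hx => ⟨hx.1, by linarith [hx.2]⟩
  have hsubh : Ioo h (1:ℝ) ⊆ Ioo (0:ℝ) 1 := fun x hx => ⟨lt_trans h0 hx.1, hx.2⟩
  set μ := volume.restrict (Ioo (0:ℝ) (1-h)) with hμdef
  -- membership facts
  have hmem : ∀ u ∈ Ioo (0:ℝ) (1-h), u ∈ Icc (0:ℝ) 1 ∧ u + h ∈ Icc (0:ℝ) 1 := by
    intro u hu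
    exact ⟨⟨hu.1.le, by linarith [hu.2]⟩, ⟨by linarith [hu.1], by linarith [hu.2]⟩⟩
  -- measurability
  have hm : AEMeasurable g (volume.restrict (Ioo (0:ℝ) 1)) :=
    aemeasurable_restrict_of_monotoneOn measurableSet_Ioo (hmono.mono Ioo_subset_Icc_self)
  have hm' : AEMeasurable g μ := hm.mono_measure (Measure.restrict_mono hsub le_rfl)
  have hmsh : AEMeasurable (fun u => g (u + h)) μ := by
    apply aemeasurable_restrict_of_monotoneOn measurableSet_Ioo
    intro u hu v hv huv
    exact hmono (hmem u hu).2 (hmem v hv).2 (by linarith)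
  set D := fun u => g (u + h) - g u with hDdef
  have hDm : AEMeasurable D μ := hmsh.sub hm'
  have hDnn : 0 ≤ᵐ[μ] D := by
    filter_upwards [ae_restrict_mem measurableSet_Ioo] with u hu
    exact sub_nonneg.mpr (hmono (hmem u hu).1 (hmem u hu).2 (by linarith))
  -- integrability of g
  have hg1 : IntegrableOn g (Ioo (0:ℝ) 1) := by
    have hbd : Integrable (fun u => 1 + |g u| ^ p) (volume.restrict (Ioo (0:ℝ) 1)) := by
      refine Integrable.add ?_ hint
      exact integrableOn_const (by rw [Real.volume_Ioo]; exact ENNReal.ofReal_ne_top)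
    refine hbd.mono' hm.aestronglyMeasurable (ae_of_all _ fun u => ?_)
    · rw [Real.norm_eq_abs]
      rcases le_or_gt (|g u|) 1 with hc | hc
      · have := Real.rpow_nonneg (abs_nonneg (g u)) p
        simpa using by linarith
      · have h3 : |g u| ≤ |g u| ^ p := by
          nth_rewrite 1 [← Real.rpow_one |g u|]
          exact Real.rpow_le_rpow_of_exponent_le hc.le (by linarith)
        linarith
  have hgsh : IntegrableOn (fun u => g (u + h)) (Ioo (0:ℝ) (1-h)) := by
    have := shift_integrableOn (c := h) h1.le (hg1.mono_set hsubh)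
    simpa using this
  have hDint : Integrable D μ := hgsh.sub (hg1.mono_set hsub)
  -- integrability and bound for D^p
  have hshp : IntegrableOn (fun u => |g (u + h)| ^ p) (Ioo (0:ℝ) (1-h)) := by
    have := shift_integrableOn (c := h) h1.le (hint.mono_set hsubh)
    simpa using this
  have hdomint : Integrable (fun u => (2:ℝ)^p * (|g (u+h)| ^ p + |g u| ^ p)) μ :=
    ((hshp.add (hint.mono_set hsub))).const_mul _
  have rpow_add_le : ∀ a b : ℝ, 0 ≤ a → 0 ≤ b → (a + b) ^ p ≤ 2^p * (a^p + b^p) := by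
    intro a b ha hb
    calc (a + b) ^ p ≤ (2 * max a b) ^ p := by
          apply Real.rpow_le_rpow (by linarith)
          · rcases le_total a b with hab | hab
            · rw [max_eq_right hab]; linarith
            · rw [max_eq_left hab]; linarith
          · exact hp0.le
      _ = 2^p * (max a b)^p := Real.mul_rpow (by norm_num) (le_max_of_le_left ha)
      _ ≤ 2^p * (a^p + b^p) := by
          apply mul_le_mul_of_nonneg_left _ (Real.rpow_nonneg (by norm_num) _)
          rcases le_total a b with hab | hab
          · rw [max_eq_right hab]
            linarith [Real.rpow_nonneg ha p]
          · rw [max_eq_left hab]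
            linarith [Real.rpow_nonneg hb p]
  have hdom : ∀ᵐ u ∂μ, D u ^ p ≤ (2:ℝ)^p * (|g (u+h)| ^ p + |g u| ^ p) := by
    filter_upwards [hDnn] with u hu
    calc D u ^ p ≤ (|g (u+h)| + |g u|) ^ p := by
          apply Real.rpow_le_rpow hu _ hp0.le
          have := le_abs_self (g (u+h)); have := neg_abs_le (g u)
          simp only [hDdef]; linarith
      _ ≤ 2^p * (|g (u+h)|^p + |g u|^p) := rpow_add_le _ _ (abs_nonneg _) (abs_nonneg _)
  have hDpm : AEMeasurable (fun u => D u ^ p) μ :=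
    (Real.continuous_rpow_const hp0.le).measurable.comp_aemeasurable hDm
  have hDpint : Integrable (fun u => D u ^ p) μ := by
    refine Integrable.mono' hdomint hDpm.aestronglyMeasurable ?_
    filter_upwards [hdom, hDnn] with u hu hnn
    rw [Real.norm_eq_abs, abs_of_nonneg (Real.rpow_nonneg hnn _)]
    exact hu
  have hDpbound : ∫ u, D u ^ p ∂μ ≤ 2^p * (I + I) := by
    refine (integral_mono_ae hDpint hdomint hdom).trans ?_
    rw [integral_const_mul, integral_add hshp (hint.mono_set hsub)]
    apply mul_le_mul_of_nonneg_left _ (Real.rpow_nonneg (by norm_num) _)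
    have e1 : ∫ u in Ioo (0:ℝ) (1-h), |g (u+h)| ^ p = ∫ u in Ioo h 1, |g u| ^ p := by
      have := shift_integral (fun u => |g u| ^ p) h 1 h h1.le
      simpa using this
    have b1 : ∫ u in Ioo h (1:ℝ), |g u| ^ p ≤ I :=
      setIntegral_mono_set hint (ae_of_all _ fun x => Real.rpow_nonneg (abs_nonneg _) _)
        (HasSubset.Subset.eventuallyLE hsubh)
    have b2 : ∫ u in Ioo (0:ℝ) (1-h), |g u| ^ p ≤ I :=
      setIntegral_mono_set hint (ae_of_all _ fun x => Real.rpow_nonneg (abs_nonneg _) _)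
        (HasSubset.Subset.eventuallyLE hsub)
    rw [hμdef] at *
    rw [e1] at *
    linarith
  -- telescoping bound
  have hT : ∫ u, D u ∂μ ≤ 2 * (I ^ (1/p) * h ^ (1 - 1/p)) := by
    have split : ∫ u, D u ∂μ = (∫ u in Ioo h 1, g u) - ∫ u in Ioo (0:ℝ) (1-h), g u := by
      rw [hμdef, integral_sub hgsh (hg1.mono_set hsub)]
      congr 1
      have := shift_integral g h 1 h h1.le
      simpa using this
    have ii : ∀ a b : ℝ, 0 ≤ a → a ≤ b → b ≤ 1 → IntervalIntegrable g volume a b :=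
      fun a b ha hab hb => (intervalIntegrable_iff_integrableOn_Ioo_of_le hab).mpr
        (hg1.mono_set (fun x hx => ⟨lt_of_le_of_lt ha hx.1, lt_of_lt_of_le hx.2 hb⟩))
    have A1 : (∫ u in (0:ℝ)..h, g u) + ∫ u in h..1, g u = ∫ u in (0:ℝ)..1, g u :=
      intervalIntegral.integral_add_adjacent_intervals (ii 0 h le_rfl h0.le h1.le)
        (ii h 1 h0.le h1.le le_rfl)
    have A2 : (∫ u in (0:ℝ)..(1-h), g u) + ∫ u in (1-h)..1, g u = ∫ u in (0:ℝ)..1, g u :=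
      intervalIntegral.integral_add_adjacent_intervals (ii 0 (1-h) le_rfl h1h.le (by linarith))
        (ii (1-h) 1 h1h.le (by linarith) le_rfl)
    have conv : ∀ a b : ℝ, a ≤ b → (∫ u in a..b, g u) = ∫ u in Ioo a b, g u := fun a b hab => by
      rw [intervalIntegral.integral_of_le hab, integral_Ioc_eq_integral_Ioo]
    have B1 : ∫ u in Ioo (1-h) 1, g u ≤ I ^ (1/p) * h ^ (1-1/p) := by
      have hs := small_interval hp1 hm hint (a := 1-h) (b := 1) h1h.le (by linarith) le_rfl
      rw [show (1:ℝ) - (1-h) = h by ring] at hs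
      refine le_trans (integral_mono (hg1.mono_set (fun x hx => ⟨by linarith [hx.1], hx.2⟩))
        ((hg1.mono_set (fun x hx => ⟨by linarith [hx.1], hx.2⟩)).abs)
        (fun x => le_abs_self _)) hs
    have B2 : -∫ u in Ioo (0:ℝ) h, g u ≤ I ^ (1/p) * h ^ (1-1/p) := by
      have hs := small_interval hp1 hm hint (a := 0) (b := h) le_rfl h0.le h1.le
      rw [show h - (0:ℝ) = h by ring] at hs
      have hsub0 : Ioo (0:ℝ) h ⊆ Ioo (0:ℝ) 1 := fun x hx => ⟨hx.1, by linarith [hx.2]⟩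
      have : -∫ u in Ioo (0:ℝ) h, g u = ∫ u in Ioo (0:ℝ) h, -g u := (integral_neg g).symm
      rw [this]
      refine le_trans (integral_mono ((hg1.mono_set hsub0).neg)
        ((hg1.mono_set hsub0).abs) (fun x => neg_le_abs _)) hs
    have c1 := conv 0 h h0.le
    have c2 := conv h 1 h1.le
    have c3 := conv 0 (1-h) h1h.le
    have c4 := conv (1-h) 1 (by linarith)
    rw [split]
    linarith
  -- Hölder interpolation
  have hconj : ((p-1)/(p-2)).HolderConjugate (p-1) := by
    rw [Real.holderConjugate_iff]
    constructor
    · exact (one_lt_div hpm2).mpr (by linarith)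
    · rw [inv_div]
      field_simp
      ring
  set A := fun u => D u ^ ((p-2)/(p-1)) with hAdef
  set B := fun u => D u ^ (p/(p-1)) with hBdef
  have hAm : AEMeasurable A μ :=
    (Real.continuous_rpow_const (by positivity)).measurable.comp_aemeasurable hDm
  have hBm : AEMeasurable B μ :=
    (Real.continuous_rpow_const (by positivity)).measurable.comp_aemeasurable hDm
  have hAnn : 0 ≤ᵐ[μ] A := by
    filter_upwards [hDnn] with u hu; exact Real.rpow_nonneg hu _
  have hBnn : 0 ≤ᵐ[μ] B := by
    filter_upwards [hDnn] with u hu; exact Real.rpow_nonneg hu _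
  have eexp1 : (p-2)/(p-1) * ((p-1)/(p-2)) = 1 := by field_simp
  have eexp2 : p/(p-1) * (p-1) = p := by field_simp
  have hAr : (fun u => |A u| ^ ((p-1)/(p-2))) =ᵐ[μ] D := by
    filter_upwards [hDnn] with u hu
    rw [hAdef]
    simp only
    rw [abs_of_nonneg (Real.rpow_nonneg hu _), ← Real.rpow_mul hu, eexp1, Real.rpow_one]
  have hBr : (fun u => |B u| ^ (p-1)) =ᵐ[μ] (fun u => D u ^ p) := by
    filter_upwards [hDnn] with u hu
    rw [hBdef]
    simp only
    rw [abs_of_nonneg (Real.rpow_nonneg hu _), ← Real.rpow_mul hu, eexp2]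
  have hmemA : MemLp A (ENNReal.ofReal ((p-1)/(p-2))) μ :=
    memLp_of_int (by positivity) hAm.aestronglyMeasurable (hDint.congr hAr.symm)
  have hmemB : MemLp B (ENNReal.ofReal (p-1)) μ :=
    memLp_of_int (by linarith) hBm.aestronglyMeasurable (hDpint.congr hBr.symm)
  have H := integral_mul_le_Lp_mul_Lq_of_nonneg hconj hAnn hBnn hmemA hmemB
  have eA : ∫ u, A u ^ ((p-1)/(p-2)) ∂μ = ∫ u, D u ∂μ := by
    refine integral_congr_ae ?_
    filter_upwards [hDnn] with u hu
    rw [hAdef]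
    simp only
    rw [← Real.rpow_mul hu, eexp1, Real.rpow_one]
  have eB : ∫ u, B u ^ (p-1) ∂μ = ∫ u, D u ^ p ∂μ := by
    refine integral_congr_ae ?_
    filter_upwards [hDnn] with u hu
    rw [hBdef]
    simp only
    rw [← Real.rpow_mul hu, eexp2]
  rw [eA, eB, one_div_div] at H
  have hLHS : ∫ u in Ioo (0:ℝ) (1-h), (g (u + h) - g u) ^ 2 = ∫ u, A u * B u ∂μ := by
    rw [hμdef]
    refine integral_congr_ae ?_
    filter_upwards [hDnn] with u hu
    have hsum : (p-2)/(p-1) + p/(p-1) = 2 := by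
      rw [← add_div]
      rw [div_eq_iff hpm1.ne']
      ring
    have key : A u * B u = D u ^ (2:ℕ) := by
      rw [hAdef, hBdef]
      simp only
      rw [← Real.rpow_add' hu (by rw [hsum]; norm_num), hsum,
        show ((2:ℝ)) = ((2:ℕ):ℝ) by norm_num, Real.rpow_natCast]
    rw [key]
  rw [hLHS]
  refine H.trans ?_
  have hTnn : (0:ℝ) ≤ 2 * (I ^ (1/p) * h ^ (1-1/p)) :=
    mul_nonneg (by norm_num) (mul_nonneg (Real.rpow_nonneg hI0 _) (Real.rpow_nonneg h0.le _))
  have h1' : (∫ u, D u ∂μ) ^ ((p-2)/(p-1)) ≤ (2 * (I ^ (1/p) * h ^ (1-1/p))) ^ ((p-2)/(p-1)) :=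
    Real.rpow_le_rpow (integral_nonneg_of_ae hDnn) hT (by positivity)
  have hDpnn : 0 ≤ ∫ u, D u ^ p ∂μ := integral_nonneg_of_ae
    (by filter_upwards [hDnn] with u hu; exact Real.rpow_nonneg hu _)
  have h2' : (∫ u, D u ^ p ∂μ) ^ (1/(p-1)) ≤ ((2:ℝ)^p * (I + I)) ^ (1/(p-1)) :=
    Real.rpow_le_rpow hDpnn hDpbound (by positivity)
  have step := mul_le_mul h1' h2' (Real.rpow_nonneg hDpnn _) (Real.rpow_nonneg hTnn _)
  refine le_trans step (le_of_eq ?_)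
  rw [show I + I = 2 * I by ring,
    show (2:ℝ)^p * (2*I) = 2^(p+1) * I by rw [Real.rpow_add two_pos, Real.rpow_one]; ring]
  rw [Real.mul_rpow (by norm_num : (0:ℝ) ≤ 2)
      (mul_nonneg (Real.rpow_nonneg hI0 _) (Real.rpow_nonneg h0.le _)),
    Real.mul_rpow (Real.rpow_nonneg hI0 _) (Real.rpow_nonneg h0.le _),
    Real.mul_rpow (Real.rpow_nonneg (by norm_num : (0:ℝ) ≤ 2) _) hI0,
    ← Real.rpow_mul hI0, ← Real.rpow_mul h0.le, ← Real.rpow_mul (by norm_num : (0:ℝ) ≤ 2)]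
  rw [show (1-1/p)*((p-2)/(p-1)) = (p-2)/p by field_simp]
  have m2 : (2:ℝ)^((p-2)/(p-1)) * 2^((p+1)*(1/(p-1))) = 2^((2*p-1)/(p-1)) := by
    rw [← Real.rpow_add two_pos]
    congr 1
    field_simp
    ring
  have mI : I^(1/p*((p-2)/(p-1))) * I^(1/(p-1)) = I^(2/p) := by
    rw [← Real.rpow_add' hI0 (by
      rw [show 1/p*((p-2)/(p-1)) + 1/(p-1) = 2/p by field_simp; ring]
      positivity)]
    congr 1
    field_simp
    ring
  rw [← m2, ← mI]
  ring
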